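/- Let m ∈ ℕ, let p, q ∈ [1, ∞] be conjugate exponents (1/p + 1/q = 1, with the convention 1/∞ = 0), let τ > 0 and û ∈ ℝᵐ. Then 0 is a global minimizer of the function y ↦ ‖y‖_p + (τ/2)‖y − û‖₂² if and only if ‖û‖_q ≤ 1/τ. Consequently, the unique global minimizer of this function is nonzero if and only if ‖û‖_q > 1/τ. -/

import Mathlib

open scoped ENNReal
open Finset

noncomputable def lpNorm (p : ℝ≥0∞) [Fact (1 ≤ p)] {m : ℕ} (y : Fin m → ℝ) : ℝ :=
  ‖(WithLp.equiv p (Fin m → ℝ)).symm y‖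

namespace Stmt15Aux

variable {m : ℕ}

lemma lpNorm_nonneg (p : ℝ≥0∞) [Fact (1 ≤ p)] (x : Fin m → ℝ) : 0 ≤ lpNorm p x :=
  norm_nonneg _

lemma lpNorm_zero (p : ℝ≥0∞) [Fact (1 ≤ p)] : lpNorm p (0 : Fin m → ℝ) = 0 := by
  simp [lpNorm]

lemma lpNorm_smul (p : ℝ≥0∞) [Fact (1 ≤ p)] (t : ℝ) (x : Fin m → ℝ) :
    lpNorm p (t • x) = |t| * lpNorm p x := by
  simp [lpNorm, norm_smul]

lemma lpNorm_eq_sum (p : ℝ≥0∞) [Fact (1 ≤ p)] (hp : p ≠ ∞) (x : Fin m → ℝ) :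
    lpNorm p x = (∑ i, |x i| ^ p.toReal) ^ (1 / p.toReal) := by
  have h1 : (1 : ℝ≥0∞) ≤ p := Fact.out
  have hp0 : p ≠ 0 := by intro h; simp [h] at h1
  rw [lpNorm, PiLp.norm_eq_sum (ENNReal.toReal_pos hp0 hp)]
  simp [Real.norm_eq_abs]

lemma lpNorm_top (x : Fin m → ℝ) : lpNorm ∞ x = ⨆ i, |x i| := by
  rw [lpNorm, PiLp.norm_eq_ciSup]
  simp [Real.norm_eq_abs]

lemma abs_le_lpNorm_top (x : Fin m → ℝ) (i : Fin m) : |x i| ≤ lpNorm ∞ x := by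
  rw [lpNorm_top]
  exact le_ciSup (f := fun j => |x j|) (Set.Finite.bddAbove (Set.finite_range _)) i



-- case analysis on conjugate exponents
lemma conj_cases {p q : ℝ≥0∞} (hpq : 1 / p + 1 / q = 1) :
    (p = 1 ∧ q = ∞) ∨ (p = ∞ ∧ q = 1) ∨
      (p ≠ ∞ ∧ q ≠ ∞ ∧ p.toReal.HolderConjugate q.toReal) := by
  have h : p⁻¹ + q⁻¹ = 1 := by simpa [one_div] using hpq
  have hc : ENNReal.HolderConjugate p q := ⟨by rw [inv_one]; exact h⟩
  rcases eq_or_ne p 1 with hp1 | hp1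
  · left
    refine ⟨hp1, ?_⟩
    rw [hp1] at h
    simp only [inv_one] at h
    have hq0 : q⁻¹ = 0 := by
      by_contra hne
      exact hne (by simpa using (ENNReal.add_right_inj ENNReal.one_ne_top).mp (show (1:ℝ≥0∞) + q⁻¹ = 1 + 0 by simpa using h))
    rwa [← ENNReal.inv_eq_zero]
  rcases eq_or_ne p ∞ with hpt | hpt
  · right; left
    refine ⟨hpt, ?_⟩
    rw [hpt] at h
    simp at h
    exact h
  · right; right
    have hq0 : q ≠ 0 := ENNReal.HolderConjugate.ne_zero q p
    have hqt : q ≠ ∞ := by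
      intro hq
      rw [hq] at h
      simp at h
      exact hp1 h
    have hp0 : p ≠ 0 := ENNReal.HolderConjugate.ne_zero p q
    refine ⟨hpt, hqt, Real.holderConjugate_iff.mpr ⟨?_, ?_⟩⟩
    · have : (1:ℝ≥0∞) < p := lt_of_le_of_ne (ENNReal.HolderConjugate.one_le p q) (Ne.symm hp1)
      have := (ENNReal.toReal_lt_toReal (by simp) hpt).mpr this
      simpa using this
    · have := congrArg ENNReal.toReal h
      rw [ENNReal.toReal_add (by simp [hp0]) (by simp [hq0])] at this
      simpa [ENNReal.toReal_inv] using this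


lemma lpNorm_one_eq (x : Fin m → ℝ) : lpNorm 1 x = ∑ i, |x i| := by
  rw [lpNorm_eq_sum 1 (by simp)]
  simp

lemma sign_mul_self (a : ℝ) : (if a < 0 then (-1:ℝ) else 1) * a = |a| := by
  rcases lt_or_ge a 0 with h | h
  · simp [h, abs_of_neg h]
  · simp [not_lt.2 h, abs_of_nonneg h]

lemma abs_sign (a : ℝ) : |if a < 0 then (-1:ℝ) else 1| = 1 := by
  split <;> simp

lemma holder_aux (p q : ℝ≥0∞) [Fact (1 ≤ p)] [Fact (1 ≤ q)] (hpq : 1 / p + 1 / q = 1)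
    (x u : Fin m → ℝ) : ∑ i, x i * u i ≤ lpNorm p x * lpNorm q u := by
  rcases conj_cases hpq with ⟨hp, hq⟩ | ⟨hp, hq⟩ | ⟨hpt, hqt, hc⟩
  · subst hp; subst hq
    rw [lpNorm_one_eq, sum_mul]
    refine Finset.sum_le_sum fun i _ => ?_
    calc x i * u i ≤ |x i * u i| := le_abs_self _
      _ = |x i| * |u i| := abs_mul _ _
      _ ≤ |x i| * lpNorm ∞ u :=
          mul_le_mul_of_nonneg_left (abs_le_lpNorm_top u i) (abs_nonneg _)
  · subst hp; subst hq
    rw [lpNorm_one_eq, mul_sum]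
    refine Finset.sum_le_sum fun i _ => ?_
    calc x i * u i ≤ |x i * u i| := le_abs_self _
      _ = |x i| * |u i| := abs_mul _ _
      _ ≤ lpNorm ∞ x * |u i| :=
          mul_le_mul_of_nonneg_right (abs_le_lpNorm_top x i) (abs_nonneg _)
  · rw [lpNorm_eq_sum p hpt, lpNorm_eq_sum q hqt]
    exact Real.inner_le_Lp_mul_Lq univ x u hc

lemma dual_aux (p q : ℝ≥0∞) [Fact (1 ≤ p)] [Fact (1 ≤ q)] (hpq : 1 / p + 1 / q = 1)
    (u : Fin m → ℝ) {c : ℝ} (hc : 0 ≤ c)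
    (h : ∀ x : Fin m → ℝ, ∑ i, x i * u i ≤ c * lpNorm p x) : lpNorm q u ≤ c := by
  rcases conj_cases hpq with ⟨hp, hq⟩ | ⟨hp, hq⟩ | ⟨hpt, hqt, hcj⟩
  · -- p = 1, q = ∞
    subst hp; subst hq
    rw [lpNorm_top]
    refine Real.iSup_le (fun i => ?_) hc
    have hx := h (Pi.single (M := fun _ => ℝ) i (if u i < 0 then (-1:ℝ) else 1))
    have hsum : ∑ j, Pi.single (M := fun _ => ℝ) i (if u i < 0 then (-1:ℝ) else 1) j * u j = |u i| := by
      rw [Finset.sum_eq_single i]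
      · rw [Pi.single_eq_same, sign_mul_self]
      · intro b _ hb; rw [Pi.single_eq_of_ne hb, zero_mul]
      · intro hi; exact absurd (mem_univ i) hi
    have hnorm : lpNorm 1 (Pi.single (M := fun _ => ℝ) i (if u i < 0 then (-1:ℝ) else 1)) = 1 := by
      rw [lpNorm_one_eq, Finset.sum_eq_single i]
      · rw [Pi.single_eq_same, abs_sign]
      · intro b _ hb; rw [Pi.single_eq_of_ne hb, abs_zero]
      · intro hi; exact absurd (mem_univ i) hi
    rw [hsum, hnorm, mul_one] at hx
    exact hx
  · -- p = ∞, q = 1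
    subst hp; subst hq
    rw [lpNorm_one_eq]
    have hx := h (fun i => if u i < 0 then (-1:ℝ) else 1)
    have hsum : ∑ i, (if u i < 0 then (-1:ℝ) else 1) * u i = ∑ i, |u i| :=
      Finset.sum_congr rfl fun i _ => sign_mul_self (u i)
    have hnorm : lpNorm ∞ (fun i => if u i < 0 then (-1:ℝ) else 1) ≤ 1 := by
      rw [lpNorm_top]
      exact Real.iSup_le (fun i => by rw [abs_sign]) zero_le_one
    rw [hsum] at hx
    calc ∑ i, |u i| ≤ c * lpNorm ∞ (fun i => if u i < 0 then (-1:ℝ) else 1) := hx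
      _ ≤ c * 1 := mul_le_mul_of_nonneg_left hnorm hc
      _ = c := mul_one c
  · -- middle case
    set pr := p.toReal with hpr
    set qr := q.toReal with hqr
    have hq1 : (1:ℝ) < qr := hcj.symm.lt
    have hqr0 : qr ≠ 0 := by positivity
    have key1 : ∀ i, ((if u i < 0 then (-1:ℝ) else 1) * |u i| ^ (qr - 1)) * u i
        = |u i| ^ qr := by
      intro i
      by_cases h0 : u i = 0
      · simp [h0, Real.zero_rpow hqr0]
      · have habs : |u i| ≠ 0 := abs_ne_zero.2 h0
        have h1 : ((if u i < 0 then (-1:ℝ) else 1) * |u i| ^ (qr - 1)) * u i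
            = |u i| ^ (qr - 1) * ((if u i < 0 then (-1:ℝ) else 1) * u i) := by ring
        have h2 := Real.rpow_add_one habs (qr - 1)
        rw [sub_add_cancel] at h2
        rw [h1, sign_mul_self, h2]
    have key2 : ∀ i, |(if u i < 0 then (-1:ℝ) else 1) * |u i| ^ (qr - 1)| ^ pr
        = |u i| ^ qr := by
      intro i
      have h1 : |(if u i < 0 then (-1:ℝ) else 1) * |u i| ^ (qr - 1)|
          = |u i| ^ (qr - 1) := by
        rw [abs_mul, abs_sign, one_mul, abs_of_nonneg (Real.rpow_nonneg (abs_nonneg _) _)]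
      rw [h1, ← Real.rpow_mul (abs_nonneg _), hcj.symm.sub_one_mul_conj]
    have hx := h (fun i => (if u i < 0 then (-1:ℝ) else 1) * |u i| ^ (qr - 1))
    rw [lpNorm_eq_sum p hpt] at hx
    simp only [key1, ← hpr, key2] at hx
    rw [lpNorm_eq_sum q hqt]
    set S : ℝ := ∑ i, |u i| ^ qr with hS
    have hS0 : 0 ≤ S := Finset.sum_nonneg fun i _ => Real.rpow_nonneg (abs_nonneg _) _
    rcases hS0.eq_or_lt with hS0' | hSpos
    · rw [← hS0', Real.zero_rpow (one_div_ne_zero hqr0)]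
      exact hc
    · have hPp : 0 < S ^ (1/pr) := Real.rpow_pos_of_pos hSpos _
      have hmul : S ^ (1/qr) * S ^ (1/pr) = S := by
        rw [← Real.rpow_add hSpos,
          show 1/qr + 1/pr = 1 by
            rw [one_div, one_div]; exact hcj.symm.inv_add_inv_eq_one,
          Real.rpow_one]
      have hfin : S ^ (1/qr) * S ^ (1/pr) ≤ c * S ^ (1/pr) := by rw [hmul]; exact hx
      exact le_of_mul_le_mul_right hfin hPp

end Stmt15Aux

open Stmt15Aux

/-- `0` minimizes `y ↦ ‖y‖_p + (τ/2)‖y − û‖₂²` iff `‖û‖_q ≤ 1/τ` for the conjugate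
exponent `q`; hence the unique minimizer is nonzero iff `‖û‖_q > 1/τ`. -/
theorem stmt_15 {m : ℕ} (p q : ℝ≥0∞) [Fact (1 ≤ p)] [Fact (1 ≤ q)]
    (hpq : 1 / p + 1 / q = 1) (τ : ℝ) (hτ : 0 < τ)
    (uhat : EuclideanSpace ℝ (Fin m))
    (g : EuclideanSpace ℝ (Fin m) → ℝ)
    (hg : ∀ y, g y = lpNorm p y + τ / 2 * ‖y - uhat‖ ^ 2) :
    ((∀ y, g 0 ≤ g y) ↔ lpNorm q uhat ≤ 1 / τ) ∧
      ∀ z : EuclideanSpace ℝ (Fin m), (∀ y, g z ≤ g y) →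
        (z ≠ 0 ↔ 1 / τ < lpNorm q uhat) := by
  have hinner : ∀ y : EuclideanSpace ℝ (Fin m),
      (inner ℝ y uhat : ℝ) = ∑ i, y i * uhat i := fun y => by
    simp [PiLp.inner_apply, RCLike.inner_apply, map_mul, mul_comm]
  have hexp : ∀ y : EuclideanSpace ℝ (Fin m),
      g y = lpNorm p y + τ / 2 * (‖y‖ ^ 2 - 2 * ∑ i, y i * uhat i + ‖uhat‖ ^ 2) := fun y => by
    rw [hg y, norm_sub_sq_real, hinner]
  have hsmul : ∀ (t : ℝ) (Y : EuclideanSpace ℝ (Fin m)),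
      lpNorm p (t • Y) = |t| * lpNorm p Y := fun t Y => lpNorm_smul p t Y
  have hg0 : g 0 = τ / 2 * ‖uhat‖ ^ 2 := by
    rw [hexp 0]
    simp [lpNorm_zero]
  have main₁ : (∀ y, g 0 ≤ g y) ↔ lpNorm q uhat ≤ 1 / τ := by
    constructor
    · intro hmin
      refine dual_aux p q hpq uhat (by positivity) fun x => ?_
      set X : EuclideanSpace ℝ (Fin m) := WithLp.toLp 2 x with hX
      set I : ℝ := ∑ i, x i * uhat i with hI
      have key : ∀ t : ℝ, 0 < t →
          τ * I ≤ lpNorm p x + τ * t / 2 * ‖X‖ ^ 2 := by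
        intro t ht
        have h1 := hmin (t • X)
        rw [hg0, hexp (t • X)] at h1
        have h2 : lpNorm p (t • X) = t * lpNorm p x := by
          rw [hsmul t X, abs_of_pos ht]
        have h3 : ‖t • X‖ ^ 2 = t ^ 2 * ‖X‖ ^ 2 := by
          rw [norm_smul, Real.norm_eq_abs, mul_pow, sq_abs]
        have h4 : ∑ i, (t • X) i * uhat i = t * I := by
          rw [hI, Finset.mul_sum]
          exact Finset.sum_congr rfl fun i _ => by
            simp [PiLp.smul_apply, smul_eq_mul]; ring
        rw [h2, h3, h4] at h1
        nlinarith [h1, ht]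
      have hτI : τ * I ≤ lpNorm p x := by
        refine le_of_forall_pos_le_add fun ε hε => ?_
        have hd : (0:ℝ) < ‖X‖ ^ 2 + 1 := by positivity
        have ht : 0 < 2 * ε / (τ * (‖X‖ ^ 2 + 1)) := by positivity
        have hk := key _ ht
        have heq : τ * (2 * ε / (τ * (‖X‖ ^ 2 + 1))) / 2 * ‖X‖ ^ 2
            = ε * ‖X‖ ^ 2 / (‖X‖ ^ 2 + 1) := by
          field_simp
        rw [heq] at hk
        have hle : ε * ‖X‖ ^ 2 / (‖X‖ ^ 2 + 1) ≤ ε := by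
          rw [div_le_iff₀ hd]
          nlinarith [sq_nonneg ‖X‖]
        linarith
      have : I ≤ 1 / τ * lpNorm p x := by
        rw [div_mul_eq_mul_div, le_div_iff₀ hτ]
        nlinarith [hτI]
      exact this
    · intro hle y
      rw [hg0, hexp y]
      have hH := holder_aux p q hpq (fun i => y i) uhat
      have hN : 0 ≤ lpNorm p y := lpNorm_nonneg p y
      have hQ : 0 ≤ lpNorm q uhat := lpNorm_nonneg q uhat
      have h1 : τ * ∑ i, y i * uhat i ≤ τ * (lpNorm p y * lpNorm q uhat) :=
        mul_le_mul_of_nonneg_left hH hτ.le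
      have h2 : τ * (lpNorm p y * lpNorm q uhat) ≤ lpNorm p y := by
        have := mul_le_mul_of_nonneg_left hle (mul_nonneg hτ.le hN)
        calc τ * (lpNorm p y * lpNorm q uhat) = τ * lpNorm p y * lpNorm q uhat := by ring
          _ ≤ τ * lpNorm p y * (1 / τ) := this
          _ = lpNorm p y := by field_simp
      nlinarith [sq_nonneg ‖y‖]
  refine ⟨main₁, fun z hz => ?_⟩
  have uniq : (∀ y, g 0 ≤ g y) → z = 0 := by
    intro h0
    have h1 := hz ((1/2 : ℝ) • z)
    rw [hexp z, hexp ((1/2 : ℝ) • z)] at h1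
    have h2 := h0 z
    rw [hg0, hexp z] at h2
    have e1 : lpNorm p ((1/2 : ℝ) • z) = 1/2 * lpNorm p z := by
      rw [hsmul, abs_of_pos]; norm_num
    have e2 : ‖(1/2 : ℝ) • z‖ ^ 2 = 1/4 * ‖z‖ ^ 2 := by
      rw [norm_smul, Real.norm_eq_abs, mul_pow, sq_abs]; norm_num
    have e3 : ∑ i, ((1/2 : ℝ) • z) i * uhat i = 1/2 * ∑ i, z i * uhat i := by
      rw [Finset.mul_sum]
      exact Finset.sum_congr rfl fun i _ => by
        simp [PiLp.smul_apply, smul_eq_mul]; ring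
    rw [e1, e2, e3] at h1
    have hz2 : ‖z‖ ^ 2 ≤ 0 := by nlinarith [lpNorm_nonneg p z]
    have : ‖z‖ = 0 := by nlinarith [norm_nonneg z, sq_nonneg ‖z‖]
    exact norm_eq_zero.1 this
  constructor
  · intro hne
    by_contra hcon
    push_neg at hcon
    exact hne (uniq (main₁.mpr hcon))
  · intro hlt hz0
    subst hz0
    exact absurd (main₁.mp hz) (not_le.2 hlt)
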